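/- Let g be the compositional inverse of the power series t - t^8 + t^15 over ℚ. Then for every n ≥ 0, the coefficient of t^(7n+1) in g equals (1/(7n+1)) times the sum over k from 0 to ⌊n/3⌋ of (-1)^k · C(7n+k, k) · C(7n+1, n-3k). -/

import Mathlib

open PowerSeries Finset

/-- Composition (substitution) of formal power series; correct when the
series being substituted has zero constant term. -/
noncomputable def psComp (f g : PowerSeries ℚ) : PowerSeries ℚ :=
  PowerSeries.mk fun n => ∑ k ∈ Finset.range (n + 1), (coeff k f) * (coeff n (g ^ k))

noncomputable def Bs (N : ℕ) : PowerSeries ℚ :=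
  PowerSeries.mk fun m => if 21 ∣ m then (-1:ℚ)^(m/21) * (Nat.choose (N + m/21) (m/21)) else 0

lemma coeff_mul_one_add_X21 (F : PowerSeries ℚ) (m : ℕ) :
    coeff m (F * (1 + X^21)) = coeff m F + if 21 ≤ m then coeff (m-21) F else 0 := by
  rw [mul_add, map_add, mul_one, coeff_mul_X_pow']

lemma coeff_Bs (N m : ℕ) : coeff m (Bs N) =
    if 21 ∣ m then (-1:ℚ)^(m/21) * (Nat.choose (N + m/21) (m/21)) else 0 := by
  simp [Bs]

lemma Bs_succ (N : ℕ) : Bs (N+1) * (1 + X^21) = Bs N := by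
  ext m
  rw [coeff_mul_one_add_X21, coeff_Bs, coeff_Bs, coeff_Bs]
  by_cases h : 21 ∣ m
  · rw [if_pos h, if_pos h]
    by_cases hm : 21 ≤ m
    · have h' : 21 ∣ (m - 21) := (Nat.dvd_sub h (dvd_refl 21))
      rw [if_pos hm, if_pos h']
      obtain ⟨k, rfl⟩ := h
      obtain ⟨j, rfl⟩ : ∃ j, k = j + 1 := ⟨k-1, by omega⟩
      have e1 : 21 * (j+1) / 21 = j+1 := by omega
      have e2 : (21 * (j+1) - 21) / 21 = j := by omega
      rw [e1, e2]
      have pascal : (N + 1 + (j+1)).choose (j+1)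
          = (N + 1 + j).choose j + (N + (j+1)).choose (j+1) := by
        rw [show N + 1 + (j+1) = (N + j + 1) + 1 by omega]
        rw [Nat.choose_succ_succ (N + j + 1) j]
        rw [show N + 1 + j = N + j + 1 by omega, show N + (j+1) = N + j + 1 by omega]
      rw [pascal]
      push_cast
      ring
    · have : m = 0 := by omega
      subst this
      simp
  · rw [if_neg h, if_neg h]
    by_cases hm : 21 ≤ m
    · have h' : ¬ 21 ∣ (m - 21) := by
        intro hc; exact h (by omega)
      rw [if_pos hm, if_neg h']; ring
    · simp [hm]

lemma Bs_zero : Bs 0 * (1 + X^21) = 1 := by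
  ext m
  rw [coeff_mul_one_add_X21, coeff_Bs, coeff_one]
  by_cases h : 21 ∣ m
  · by_cases hm : 21 ≤ m
    · have h' : 21 ∣ (m - 21) := (Nat.dvd_sub h (dvd_refl 21))
      rw [if_pos h, coeff_Bs, if_pos hm, if_pos h']
      obtain ⟨k, rfl⟩ := h
      obtain ⟨j, rfl⟩ : ∃ j, k = j + 1 := ⟨k-1, by omega⟩
      have e1 : 21 * (j+1) / 21 = j+1 := by omega
      have e2 : (21 * (j+1) - 21) / 21 = j := by omega
      rw [e1, e2, if_neg (by omega : ¬ 21 * (j+1) = 0)]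
      simp [pow_succ]
    · have : m = 0 := by omega
      subst this; simp
  · have hm0 : ¬ m = 0 := by rintro rfl; exact h ⟨0, rfl⟩
    rw [if_neg h, if_neg hm0, coeff_Bs]
    by_cases hm : 21 ≤ m
    · have h' : ¬ 21 ∣ (m - 21) := by intro hc; exact h (by omega)
      rw [if_pos hm, if_neg h']; ring
    · simp [hm]

lemma Bs_inv (N : ℕ) : Bs N * (1 + X^21)^(N+1) = 1 := by
  induction N with
  | zero => simpa using Bs_zero
  | succ n ih =>
    have : Bs (n+1) * (1 + X^21)^(n+1+1) = (Bs (n+1) * (1 + X^21)) * (1 + X^21)^(n+1) := by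
      ring
    rw [this, Bs_succ, ih]

noncomputable def uu : PowerSeries ℚ := 1 - X^7 + X^14
noncomputable def W : PowerSeries ℚ := (1 + X^7) * Bs 0

lemma u_mul_W : uu * W = 1 := by
  have h7 : uu * (1 + X^7) = 1 + X^21 := by
    rw [uu]; ring
  rw [W, ← mul_assoc, h7]
  have := Bs_zero
  rw [mul_comm] at this
  exact this

lemma Bs_zero_pow (N : ℕ) : Bs 0 ^ (N+1) = Bs N := by
  have h1 : Bs 0 ^ (N+1) * (1 + X^21)^(N+1) = 1 := by
    rw [← mul_pow, Bs_zero, one_pow]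
  calc Bs 0 ^ (N+1) = Bs 0 ^ (N+1) * (Bs N * (1 + X^21)^(N+1)) := by rw [Bs_inv, mul_one]
    _ = Bs N * (Bs 0 ^ (N+1) * (1 + X^21)^(N+1)) := by ring
    _ = Bs N := by rw [h1, mul_one]

lemma W_pow (N : ℕ) : W ^ (N+1) = (1 + X^7)^(N+1) * Bs N := by
  rw [W, mul_pow, Bs_zero_pow]

lemma coeff_one_add_X7_pow (N m : ℕ) :
    coeff m ((1 + X^7)^N) = if 7 ∣ m then (Nat.choose N (m/7) : ℚ) else 0 := by
  have : (1 + X^7 : PowerSeries ℚ)^N = ∑ k ∈ range (N+1), X^(7*k) * (N.choose k : ℚ⟦X⟧) := by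
    rw [add_comm, add_pow]
    refine Finset.sum_congr rfl fun k _ => ?_
    rw [one_pow, mul_one, pow_mul]
  rw [this, map_sum]
  have hc : ∀ k ∈ range (N+1), coeff m (X^(7*k) * (N.choose k : ℚ⟦X⟧))
      = if m = 7*k then (N.choose k : ℚ) else 0 := by
    intro k _
    rw [mul_comm, coeff_mul_X_pow']
    by_cases h : m = 7*k
    · rw [if_pos h, if_pos (by omega), h]
      have : (N.choose k : ℚ⟦X⟧) = C ((N.choose k : ℕ) : ℚ) := by rw [map_natCast]
      rw [this, Nat.sub_self, coeff_C]
      simp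
    · rw [if_neg h]
      by_cases h2 : 7*k ≤ m
      · rw [if_pos h2]
        have h3 : ¬ (m - 7*k = 0) := by omega
        have : (N.choose k : ℚ⟦X⟧) = C ((N.choose k : ℕ) : ℚ) := by rw [map_natCast]
        rw [this, coeff_C, if_neg h3]
      · rw [if_neg h2]
  rw [Finset.sum_congr rfl hc]
  by_cases h : 7 ∣ m
  · rw [if_pos h]
    by_cases h2 : m / 7 ≤ N
    · rw [Finset.sum_eq_single (m/7)]
      · rw [if_pos (by omega)]
      · intro b _ hb
        rw [if_neg (by omega)]
      · intro hn
        exact absurd (Finset.mem_range.mpr (by omega)) hn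
    · rw [Finset.sum_eq_zero, Nat.choose_eq_zero_of_lt (by omega)]
      · norm_num
      · intro b hb
        rw [Finset.mem_range] at hb
        rw [if_neg (by omega)]
  · rw [if_neg h, Finset.sum_eq_zero]
    intro b _
    rw [if_neg (fun hc => h ⟨b, hc⟩)]

lemma coeff_W_pow (n : ℕ) :
    coeff (7*n) (W ^ (7*n+1)) =
      ∑ k ∈ Finset.range (n / 3 + 1),
        (-1 : ℚ) ^ k * (Nat.choose (7 * n + k) k) * (Nat.choose (7 * n + 1) (n - 3 * k)) := by
  rw [W_pow, show (1+X^7:ℚ⟦X⟧)^(7*n+1) * Bs (7*n) = Bs (7*n) * (1+X^7)^(7*n+1) from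
    mul_comm _ _, coeff_mul, Finset.Nat.sum_antidiagonal_eq_sum_range_succ_mk]
  have hterm : ∀ j ∈ range (7*n+1), coeff j (Bs (7*n)) * coeff (7*n - j) ((1 + X^7)^(7*n+1))
      = if 21 ∣ j then ((-1:ℚ)^(j/21) * (Nat.choose (7*n + j/21) (j/21)) *
          (Nat.choose (7*n+1) ((7*n - j)/7))) else 0 := by
    intro j hj
    rw [Finset.mem_range] at hj
    rw [coeff_Bs, coeff_one_add_X7_pow]
    by_cases h : 21 ∣ j
    · have h7 : 7 ∣ (7*n - j) := by
        obtain ⟨k, rfl⟩ := h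
        exact ⟨n - 3*k, by omega⟩
      rw [if_pos h, if_pos h, if_pos h7]
    · rw [if_neg h, if_neg h, zero_mul]
  rw [Finset.sum_congr rfl hterm]
  rw [Finset.sum_ite, Finset.sum_const_zero, add_zero]
  -- now sum over the filtered set of multiples of 21
  have himg : Finset.filter (fun j => 21 ∣ j) (range (7*n+1))
      = (range (n/3 + 1)).image (fun k => 21 * k) := by
    ext j
    simp only [Finset.mem_filter, Finset.mem_range, Finset.mem_image]
    constructor
    · rintro ⟨hj, k, rfl⟩
      exact ⟨k, by omega, by omega⟩
    · rintro ⟨k, hk, rfl⟩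
      exact ⟨by omega, ⟨k, by omega⟩⟩
  rw [himg, Finset.sum_image (by intro a _ b _ h; simp only at h; omega)]
  refine Finset.sum_congr rfl fun k hk => ?_
  rw [Finset.mem_range] at hk
  have h3k : 3 * k ≤ n := by omega
  have e1 : 21 * k / 21 = k := by omega
  have e2 : (7*n - 21*k)/7 = n - 3*k := by omega
  rw [e1, e2]

lemma coeff_X_mul_derivative (F : ℚ⟦X⟧) (j : ℕ) :
    coeff j (X * d⁄dX ℚ F) = (j : ℚ) * coeff j F := by
  rw [mul_comm, ← pow_one (X : ℚ⟦X⟧), coeff_mul_X_pow']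
  cases j with
  | zero => simp
  | succ i =>
    rw [if_pos (by omega)]
    rw [show i + 1 - 1 = i from rfl, coeff_derivative]
    push_cast
    ring

lemma derivative_W : d⁄dX ℚ W = -(W^2) * d⁄dX ℚ uu := by
  have h := congrArg (d⁄dX ℚ) u_mul_W
  rw [Derivation.leibniz, Derivation.map_one_eq_zero] at h
  rw [smul_eq_mul, smul_eq_mul] at h
  linear_combination W * h - (d⁄dX ℚ W) * u_mul_W

lemma derivative_f : d⁄dX ℚ (X * uu) = X * d⁄dX ℚ uu + uu := by
  rw [Derivation.leibniz, smul_eq_mul, smul_eq_mul, derivative_X, mul_one]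

lemma key_vanish (j : ℕ) (hj : 1 ≤ j) :
    coeff j (W^(j+1) * d⁄dX ℚ (X * uu)) = 0 := by
  have hDWj : d⁄dX ℚ (W^j) = j • (W ^ (j-1) * (-(W^2) * d⁄dX ℚ uu)) := by
    rw [Derivation.leibniz_pow, derivative_W, smul_eq_mul]
  have hpow : W ^ (j-1) * W^2 = W^(j+1) := by
    rw [← pow_add]
    congr 1
    omega
  have h1 : X * d⁄dX ℚ (W^j) = -((j : ℚ⟦X⟧) * (W^(j+1) * (X * d⁄dX ℚ uu))) := by
    rw [hDWj, nsmul_eq_mul]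
    linear_combination (-(j : ℚ⟦X⟧)) * X * (d⁄dX ℚ uu) * hpow
  have h2 := congrArg (coeff j) h1
  rw [coeff_X_mul_derivative] at h2
  rw [map_neg] at h2
  have hj' : ((j : ℚ⟦X⟧)) = C (j : ℚ) := by push_cast; rfl
  rw [hj', coeff_C_mul] at h2
  have h3 : W ^ (j+1) * uu = W ^ j := by
    rw [pow_succ, mul_assoc, mul_comm W uu, u_mul_W, mul_one]
  have h4 : (j:ℚ) * coeff j (W^(j+1) * d⁄dX ℚ (X * uu)) = 0 := by
    rw [derivative_f, mul_add, map_add, mul_add]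
    rw [show W^(j+1) * (X * d⁄dX ℚ uu) = W^(j+1) * X * d⁄dX ℚ uu by ring] at h2
    rw [show W^(j+1) * (X * d⁄dX ℚ uu) = W^(j+1) * X * d⁄dX ℚ uu by ring]
    rw [h3] at *
    linarith [h2]
  have : (j:ℚ) ≠ 0 := by positivity
  exact (mul_eq_zero.mp h4).resolve_left this

lemma coeff_zero_W : coeff 0 W = 1 := by
  simp [W, coeff_mul, coeff_Bs]

/-- If `g` is the compositional inverse of `t - t^8 + t^15` over `ℚ`, then for
every `n ≥ 0` the coefficient of `t^(7n+1)` in `g` equals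
`(1/(7n+1)) ∑_{k=0}^{⌊n/3⌋} (-1)^k C(7n+k,k) C(7n+1,n-3k)`. -/
theorem coeff_inverse_formula (g : PowerSeries ℚ) (hg0 : coeff 0 g = 0)
    (h1 : psComp (PowerSeries.X - PowerSeries.X ^ 8 + PowerSeries.X ^ 15) g = PowerSeries.X)
    (h2 : psComp g (PowerSeries.X - PowerSeries.X ^ 8 + PowerSeries.X ^ 15) = PowerSeries.X) :
    ∀ n : ℕ, coeff (7 * n + 1) g =
      (1 / (7 * n + 1 : ℚ)) *
        ∑ k ∈ Finset.range (n / 3 + 1),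
          (-1 : ℚ) ^ k * (Nat.choose (7 * n + k) k) * (Nat.choose (7 * n + 1) (n - 3 * k)) := by
  intro n
  have hfXu : (PowerSeries.X : ℚ⟦X⟧) - PowerSeries.X^8 + PowerSeries.X^15 = X * uu := by
    rw [uu]; ring
  set M := 7*n with hM
  set S : ℚ⟦X⟧ := ∑ k ∈ range (M+2), coeff k g • (X*uu)^k with hSdef
  have hScoeff : ∀ L, L ≤ M+1 → coeff L S = if L = 1 then 1 else 0 := by
    intro L hL
    have e1 : coeff L S = ∑ k ∈ range (M+2), coeff k g * coeff L ((X*uu)^k) := by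
      rw [hSdef, map_sum]
      exact Finset.sum_congr rfl fun k _ => by rw [map_smul, smul_eq_mul]
    have hzero : ∀ k ∈ range (M+2), k ∉ range (L+1) →
        coeff k g * coeff L ((X*uu)^k) = 0 := by
      intro k _ hk
      rw [Finset.mem_range, not_lt] at hk
      rw [mul_pow, coeff_X_pow_mul', if_neg (by omega), mul_zero]
    have e2 := Finset.sum_subset (Finset.range_subset_range.mpr (by omega : L+1 ≤ M+2)) hzero
    have e3 := congrArg (coeff L) h2
    rw [psComp, coeff_mk, hfXu] at e3
    rw [e1, ← e2, e3, coeff_X]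
  have hT : ∀ L, L ≤ M → coeff L (d⁄dX ℚ S) = if L = 0 then 1 else 0 := by
    intro L hL
    rw [coeff_derivative, hScoeff (L+1) (by omega)]
    by_cases h : L = 0
    · subst h; norm_num
    · rw [if_neg (by omega), if_neg h, zero_mul]
  have step1 : coeff M (d⁄dX ℚ S * W^(M+1)) = coeff M (W^(M+1)) := by
    have hd : d⁄dX ℚ S * W^(M+1) - W^(M+1) = (d⁄dX ℚ S - 1) * W^(M+1) := by ring
    have hz : coeff M ((d⁄dX ℚ S - 1) * W^(M+1)) = 0 := by
      rw [coeff_mul]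
      apply Finset.sum_eq_zero
      rintro ⟨i,j⟩ hij
      rw [Finset.HasAntidiagonal.mem_antidiagonal] at hij
      have hi : coeff i (d⁄dX ℚ S - 1) = 0 := by
        rw [map_sub, hT i (by omega), coeff_one]
        by_cases h : i = 0 <;> simp [h]
      simp only [hi, zero_mul]
    have hc := congrArg (coeff M) hd
    rw [map_sub, hz] at hc
    linarith [hc]
  have step2 : coeff M (d⁄dX ℚ S * W^(M+1)) = ((M+1 : ℕ) : ℚ) * coeff (M+1) g := by
    have hDS : d⁄dX ℚ S * W^(M+1) = ∑ k ∈ range (M+2),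
        coeff k g • ((k : ℚ⟦X⟧) * ((X*uu)^(k-1) * d⁄dX ℚ (X*uu) * W^(M+1))) := by
      rw [hSdef, map_sum, Finset.sum_mul]
      refine Finset.sum_congr rfl fun k _ => ?_
      rw [Derivation.map_smul, Derivation.leibniz_pow, smul_eq_mul, nsmul_eq_mul,
        smul_mul_assoc]
      congr 1
      ring
    rw [hDS, map_sum, Finset.sum_eq_single (M+1)]
    · rw [map_smul, smul_eq_mul]
      have hcast : ((M+1 : ℕ) : ℚ⟦X⟧) = C ((M+1 : ℕ) : ℚ) := by
        simp
      have hcollapse : uu^M * W^M = 1 := by rw [← mul_pow, u_mul_W, one_pow]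
      have hterm : (X*uu)^(M+1-1) * d⁄dX ℚ (X*uu) * W^(M+1)
          = X^M * (d⁄dX ℚ (X*uu) * W) := by
        rw [show M+1-1 = M from rfl, mul_pow, pow_succ W M]
        linear_combination (X:ℚ⟦X⟧)^M * (d⁄dX ℚ (X*uu)) * W * hcollapse
      have hXM := coeff_X_pow_mul (d⁄dX ℚ (X*uu) * W) M 0
      rw [zero_add] at hXM
      have hzeroc : coeff 0 (d⁄dX ℚ (X*uu) * W) = 1 := by
        rw [coeff_mul]
        rw [show Finset.HasAntidiagonal.antidiagonal 0 = {(0,0)} from rfl, Finset.sum_singleton]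
        rw [coeff_zero_W, mul_one, derivative_f, map_add, coeff_X_mul_derivative]
        rw [uu]
        simp
      rw [hterm, hcast, coeff_C_mul, hXM, hzeroc]
      push_cast
      ring
    · intro k hk hne
      rw [Finset.mem_range] at hk
      rw [map_smul, smul_eq_mul]
      rcases Nat.eq_zero_or_pos k with h0 | h1
      · subst h0; simp
      · have hk' : k ≤ M := by omega
        have hcollapse : uu^(k-1) * W^(k-1) = 1 := by rw [← mul_pow, u_mul_W, one_pow]
        have hWsplit : W^(M+1) = W^(k-1) * W^((M+1-k)+1) := by
          rw [← pow_add]; congr 1; omega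
        have hre : (X*uu)^(k-1) * d⁄dX ℚ (X*uu) * W^(M+1)
            = X^(k-1) * (W^((M+1-k)+1) * d⁄dX ℚ (X*uu)) := by
          rw [mul_pow, hWsplit]
          linear_combination (X:ℚ⟦X⟧)^(k-1) * (d⁄dX ℚ (X*uu)) * W^((M+1-k)+1) * hcollapse
        have hXk := coeff_X_pow_mul (W^((M+1-k)+1) * d⁄dX ℚ (X*uu)) (k-1) (M+1-k)
        rw [show (M+1-k)+(k-1) = M by omega] at hXk
        have hcast : ((k : ℕ) : ℚ⟦X⟧) = C ((k : ℕ) : ℚ) := by simp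
        rw [hre, hcast, coeff_C_mul, hXk, key_vanish (M+1-k) (by omega), mul_zero, mul_zero]
    · intro h
      exact absurd (Finset.mem_range.mpr (by omega)) h
  have hfinal : ((M+1 : ℕ) : ℚ) * coeff (M+1) g
      = ∑ k ∈ Finset.range (n / 3 + 1),
          (-1 : ℚ) ^ k * (Nat.choose (7 * n + k) k) * (Nat.choose (7 * n + 1) (n - 3 * k)) := by
    rw [← step2, step1, hM]
    exact coeff_W_pow n
  have hne : ((M+1 : ℕ) : ℚ) ≠ 0 := by positivity
  rw [show (7*n+1 : ℕ) = M + 1 from rfl, ← hfinal]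
  rw [show ((7:ℚ) * n + 1) = ((M+1 : ℕ) : ℚ) by push_cast [hM]; ring]
  field_simp
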